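/- Let G be an AT-free graph, let x, y be nonadjacent vertices, and let z ∈ I(x,y). Then every vertex w ∈ I(x,y) \ N[z] lies in I(x,z), or in I(z,y), or in a component of G − N[z] containing neither x nor y. -/

import Mathlib

open SimpleGraph

/-- The closed neighborhood of a vertex. -/
def closedNbh {V : Type*} (G : SimpleGraph V) (v : V) : Set V :=
  insert v (G.neighborSet v)

/-- `u` and `w` are joined by a walk all of whose vertices avoid the set `A`. -/
def reachAvoid {V : Type*} (G : SimpleGraph V) (A : Set V) (u w : V) : Prop :=
  ∃ p : G.Walk u w, ∀ x ∈ p.support, x ∉ A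

/-- `{p, q, r}` is an asteroidal triple: three pairwise nonadjacent (distinct) vertices
such that every two of them are joined by a path avoiding the closed neighborhood
of the third. -/
def IsAT {V : Type*} (G : SimpleGraph V) (p q r : V) : Prop :=
  p ≠ q ∧ p ≠ r ∧ q ≠ r ∧ ¬ G.Adj p q ∧ ¬ G.Adj p r ∧ ¬ G.Adj q r ∧
  reachAvoid G (closedNbh G r) p q ∧ reachAvoid G (closedNbh G q) p r ∧
  reachAvoid G (closedNbh G p) q r

/-- `C` is a block at `v`: a connected component of `G − N[v]`. -/
def IsBlockAt {V : Type*} (G : SimpleGraph V) (v : V) (C : Set V) : Prop :=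
  C.Nonempty ∧ C ⊆ (closedNbh G v)ᶜ ∧ (G.induce C).Connected ∧
  ∀ u ∉ C, u ∉ closedNbh G v → ∀ c ∈ C, ¬ G.Adj u c

/-- `z` is between the nonadjacent vertices `x` and `y`: `z` and `x` lie in a common
component of `G − N[y]`, and `z` and `y` lie in a common component of `G − N[x]`. -/
def Between {V : Type*} (G : SimpleGraph V) (x y z : V) : Prop :=
  reachAvoid G (closedNbh G y) x z ∧ reachAvoid G (closedNbh G x) y z

/-- The interval between `x` and `y`: all vertices between `x` and `y`. -/
def interval {V : Type*} (G : SimpleGraph V) (x y : V) : Set V :=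
  {z | Between G x y z}


lemma reachAvoid.symm {V : Type*} {G : SimpleGraph V} {A : Set V} {u w : V}
    (h : reachAvoid G A u w) : reachAvoid G A w u := by
  obtain ⟨p, hp⟩ := h
  exact ⟨p.reverse, by simpa using hp⟩

lemma reachAvoid.trans {V : Type*} {G : SimpleGraph V} {A : Set V} {u v w : V}
    (h1 : reachAvoid G A u v) (h2 : reachAvoid G A v w) : reachAvoid G A u w := by
  obtain ⟨p, hp⟩ := h1; obtain ⟨q, hq⟩ := h2
  refine ⟨p.append q, fun a ha => ?_⟩
  rw [SimpleGraph.Walk.mem_support_append_iff] at ha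
  rcases ha with h | h
  · exact hp a h
  · exact hq a h

lemma reachAvoid.start_notMem {V : Type*} {G : SimpleGraph V} {A : Set V} {u w : V}
    (h : reachAvoid G A u w) : u ∉ A := by
  obtain ⟨p, hp⟩ := h; exact hp u p.start_mem_support

lemma reachAvoid.end_notMem {V : Type*} {G : SimpleGraph V} {A : Set V} {u w : V}
    (h : reachAvoid G A u w) : w ∉ A := by
  obtain ⟨p, hp⟩ := h; exact hp w p.end_mem_support

lemma walk_reach {V : Type*} {G : SimpleGraph V} {D : Set V} :
    ∀ {a b : V} (p : G.Walk a b) (hp : ∀ v ∈ p.support, v ∈ D),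
    (G.induce D).Reachable ⟨a, hp a p.start_mem_support⟩ ⟨b, hp b p.end_mem_support⟩ := by
  intro a b p
  induction p with
  | nil => intro _; rfl
  | cons h q ih =>
    intro hp
    have ha : _ := hp _ List.mem_cons_self
    have hq : ∀ v ∈ q.support, v ∈ D := fun v hv => hp v (List.mem_cons_of_mem _ hv)
    exact (SimpleGraph.Reachable.refl _).trans
      ((SimpleGraph.Adj.reachable
        (by exact h : (G.induce D).Adj ⟨_, ha⟩ ⟨_, hq _ q.start_mem_support⟩)).trans (ih hq))

/-- in an AT-free graph, for nonadjacent `x, y` and `z ∈ I(x,y)`, every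
vertex `w ∈ I(x,y) \ N[z]` lies in `I(x,z)`, in `I(z,y)`, or in a component of
`G − N[z]` containing neither `x` nor `y`. -/
theorem stmt11 {V : Type*} (G : SimpleGraph V) (hAT : ∀ p q r : V, ¬ IsAT G p q r)
    (x y : V) (hxy : ¬ G.Adj x y) (hne : x ≠ y)
    (z : V) (hz : z ∈ interval G x y)
    (w : V) (hw : w ∈ interval G x y) (hwz : w ∉ closedNbh G z) :
    w ∈ interval G x z ∨ w ∈ interval G z y ∨
      ∃ D : Set V, IsBlockAt G z D ∧ w ∈ D ∧ x ∉ D ∧ y ∉ D := by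
  obtain ⟨hzx, hzy⟩ := hz
  obtain ⟨hwx, hwy⟩ := hw
  set D : Set V := {u | reachAvoid G (closedNbh G z) w u} with hD
  have hwD : w ∈ D := ⟨SimpleGraph.Walk.nil, by simpa using hwz⟩
  by_cases hx : x ∈ D
  · by_cases hy : y ∈ D
    · exfalso
      apply hAT x y z
      have hzNx : z ∉ closedNbh G x := hzy.end_notMem
      have hzNy : z ∉ closedNbh G y := hzx.end_notMem
      simp only [closedNbh, Set.mem_insert_iff, SimpleGraph.mem_neighborSet, not_or] at hzNx hzNy
      exact ⟨hne, fun h => hzNx.1 h.symm, fun h => hzNy.1 h.symm, hxy, hzNx.2, hzNy.2,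
        (reachAvoid.symm hx).trans hy, hzx, hzy⟩
    · exact Or.inl ⟨reachAvoid.symm hx, (reachAvoid.symm hzy).trans hwy⟩
  · by_cases hy : y ∈ D
    · exact Or.inr (Or.inl ⟨(reachAvoid.symm hzx).trans hwx, reachAvoid.symm hy⟩)
    · refine Or.inr (Or.inr ⟨D, ⟨⟨w, hwD⟩, fun u hu => reachAvoid.end_notMem hu, ?_, ?_⟩,
        hwD, hx, hy⟩)
      · rw [SimpleGraph.connected_iff]
        refine ⟨?_, ⟨⟨w, hwD⟩⟩⟩
        have key : ∀ (a : V) (ha : a ∈ D),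
            (G.induce D).Reachable ⟨w, hwD⟩ ⟨a, ha⟩ := by
          intro a ha
          obtain ⟨p, hp⟩ := ha
          classical
          have hsub : ∀ v ∈ p.support, v ∈ D := by
            intro v hv
            exact ⟨p.takeUntil v hv,
              fun u hu => hp u (SimpleGraph.Walk.support_takeUntil_subset p hv hu)⟩
          exact walk_reach p hsub
        rintro ⟨a, ha⟩ ⟨b, hb⟩
        exact (key a ha).symm.trans (key b hb)
      · intro u hu hNz c hc hadj
        apply hu
        obtain ⟨p, hp⟩ := hc
        refine ⟨p.concat hadj.symm, fun v hv => ?_⟩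
        rw [SimpleGraph.Walk.support_concat, List.mem_append] at hv
        rcases hv with h | h
        · exact hp v h
        · simp at h; exact h ▸ hNz
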